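/- (Corollary B.1.) Let E be a finite-dimensional real normed vector space, Q ⊆ E a closed convex set, ȳ ∈ Q, l : E → ℝ affine, ρ ≥ 2, μ > 0, r̄ > 0, and let x̄ ∈ Q with ‖x̄ − ȳ‖ ≤ r̄. Define ψ(r) = max{ l(x) : x ∈ Q, ‖x − ȳ‖ ≤ r } for r ≥ 0 and λ*_μ(x̄) = sup_{y∈Q} { l(y) − (μ/2)‖y − x̄‖^ρ }. Then for every b > 0: λ*_μ(x̄) ≤ ψ(r̄) + (1+b) ((ρ−1)/ρ) (2/(μρ))^{1/(ρ−1)} ( (ψ(r̄) − ψ(0))/r̄ )^{ρ/(ρ−1)} + (μ/(2 b^{ρ−1})) r̄^ρ. -/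

import Mathlib

noncomputable section

open Real

private lemma young_aux {ρ μ' Δ r : ℝ} (hρ : 2 ≤ ρ) (hμ' : 0 < μ') (hΔ : 0 ≤ Δ) (hr : 0 ≤ r) :
    Δ * r ≤ μ'/2 * r ^ ρ + (ρ-1)/ρ * (2/(μ'*ρ)) ^ (1/(ρ-1)) * Δ ^ (ρ/(ρ-1)) := by
  have hρ1 : (1:ℝ) < ρ := by linarith
  have hρ0 : (0:ℝ) < ρ := by linarith
  have hρm1 : (0:ℝ) < ρ - 1 := by linarith
  set q : ℝ := ρ/(ρ-1) with hq
  have hqinv : q⁻¹ = (ρ-1)/ρ := by rw [hq, inv_div]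
  have hq0 : 0 < q := by positivity
  have hpq : ρ.HolderConjugate q := Real.holderConjugate_iff.mpr ⟨hρ1, by rw [hqinv]; field_simp; ring⟩
  set c : ℝ := μ'*ρ/2 with hc
  have hc0 : 0 < c := by positivity
  have key := Real.young_inequality_of_nonneg
    (a := r * c ^ (1/ρ)) (b := Δ * c ^ (-(1/ρ)))
    (by positivity) (by positivity) hpq
  have e1 : r * c ^ (1/ρ) * (Δ * c ^ (-(1/ρ))) = Δ * r := by
    rw [mul_mul_mul_comm, ← Real.rpow_add hc0]
    simp [mul_comm]
  have e2 : (r * c ^ (1/ρ)) ^ ρ / ρ = μ'/2 * r ^ ρ := by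
    rw [Real.mul_rpow hr (by positivity), ← Real.rpow_mul hc0.le,
      one_div_mul_cancel hρ0.ne', Real.rpow_one, hc]
    field_simp
  have e3 : (Δ * c ^ (-(1/ρ))) ^ q / q = (ρ-1)/ρ * (2/(μ'*ρ)) ^ (1/(ρ-1)) * Δ ^ q := by
    rw [Real.mul_rpow hΔ (by positivity), ← Real.rpow_mul hc0.le]
    have : -(1/ρ) * q = -(1/(ρ-1)) := by
      rw [hq]; field_simp
    rw [this, Real.rpow_neg hc0.le, ← Real.inv_rpow hc0.le]
    have : c⁻¹ = 2/(μ'*ρ) := by rw [hc]; field_simp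
    rw [this, div_eq_mul_inv _ q, hqinv]
    ring
  rw [e1, e2, e3] at key
  exact key

private lemma add_rpow_le_aux {ρ b s t : ℝ} (hρ : 2 ≤ ρ) (hb : 0 < b) (hs : 0 ≤ s) (ht : 0 ≤ t) :
    (s + t) ^ ρ ≤ (1+b)^(ρ-1) * s^ρ + (1+1/b)^(ρ-1) * t^ρ := by
  have hρ1 : (1:ℝ) ≤ ρ := by linarith
  have h1b : (0:ℝ) < 1 + b := by linarith
  have h1b' : (0:ℝ) < 1 + 1/b := by positivity
  have hcv := (convexOn_rpow hρ1).2 (Set.mem_Ici.2 (by positivity : (0:ℝ) ≤ (1+b)*s))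
    (Set.mem_Ici.2 (by positivity : (0:ℝ) ≤ (1+1/b)*t))
    (by positivity : (0:ℝ) ≤ 1/(1+b)) (by positivity : (0:ℝ) ≤ b/(1+b))
    (by field_simp : 1/(1+b) + b/(1+b) = 1)
  simp only [smul_eq_mul] at hcv
  have e0 : 1/(1+b) * ((1+b)*s) + b/(1+b) * ((1+1/b)*t) = s + t := by
    field_simp
    ring
  rw [e0] at hcv
  refine hcv.trans (le_of_eq ?_)
  rw [Real.mul_rpow h1b.le hs, Real.mul_rpow h1b'.le ht]
  have e1 : 1/(1+b) * ((1+b)^ρ * s^ρ) = (1+b)^(ρ-1) * s^ρ := by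
    rw [Real.rpow_sub h1b, Real.rpow_one]; ring
  have e2 : b/(1+b) * ((1+1/b)^ρ * t^ρ) = (1+1/b)^(ρ-1) * t^ρ := by
    rw [Real.rpow_sub h1b', Real.rpow_one]
    field_simp
    ring
  rw [e1, e2]

private lemma lemmaB2 {E : Type*} [NormedAddCommGroup E] [NormedSpace ℝ E]
    (Q : Set E) (hQconv : Convex ℝ Q) (ybar : E) (hybar : ybar ∈ Q)
    (l : E →ᵃ[ℝ] ℝ) (ρ μ' : ℝ) (hρ : 2 ≤ ρ) (hμ' : 0 < μ')
    (rbar : ℝ) (hrbar : 0 < rbar) (ψ : ℝ → ℝ)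
    (hψ : ∀ r : ℝ, 0 ≤ r →
      IsGreatest ((fun x => l x) '' (Q ∩ Metric.closedBall ybar r)) (ψ r))
    (y : E) (hy : y ∈ Q) :
    l y - μ'/2 * ‖y - ybar‖^ρ ≤
      ψ rbar + (ρ-1)/ρ * (2/(μ'*ρ))^(1/(ρ-1)) * ((ψ rbar - ψ 0)/rbar)^(ρ/(ρ-1)) := by
  have hρ0 : (0:ℝ) < ρ := by linarith
  -- ψ 0 = l ybar
  have hψ0 : ψ 0 = l ybar := by
    obtain ⟨x, ⟨hxQ, hxb⟩, hlx⟩ := (hψ 0 le_rfl).1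
    have : x = ybar := by
      have := Metric.mem_closedBall.1 hxb
      simpa [dist_le_zero] using this
    rw [← hlx, this]
  -- ψ 0 ≤ ψ rbar
  have hmono : ψ 0 ≤ ψ rbar := by
    refine (hψ rbar hrbar.le).2 ⟨ybar, ⟨hybar, ?_⟩, hψ0.symm⟩
    simp [Metric.mem_closedBall, hrbar.le]
  set Δ : ℝ := (ψ rbar - ψ 0)/rbar with hΔdef
  have hΔ : 0 ≤ Δ := by
    apply div_nonneg _ hrbar.le; linarith
  set r : ℝ := ‖y - ybar‖ with hrdef
  have hr : 0 ≤ r := norm_nonneg _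
  have hK : 0 ≤ (ρ-1)/ρ * (2/(μ'*ρ))^(1/(ρ-1)) * Δ^(ρ/(ρ-1)) := by
    have h1 : (0:ℝ) ≤ (ρ-1)/ρ := div_nonneg (by linarith) hρ0.le
    have h2 : (0:ℝ) ≤ (2/(μ'*ρ))^(1/(ρ-1)) := Real.rpow_nonneg (by positivity) _
    have h3 : (0:ℝ) ≤ Δ^(ρ/(ρ-1)) := Real.rpow_nonneg hΔ _
    positivity
  rcases le_or_gt r rbar with hcase | hcase
  · -- r ≤ rbar
    have hly : l y ≤ ψ rbar := by
      refine (hψ rbar hrbar.le).2 ⟨y, ⟨hy, ?_⟩, rfl⟩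
      simpa [Metric.mem_closedBall, dist_eq_norm] using hcase
    have : 0 ≤ μ'/2 * r^ρ := by positivity
    linarith
  · -- rbar < r
    have hrpos : 0 < r := lt_trans hrbar hcase
    set t : ℝ := rbar / r with htdef
    have ht0 : 0 < t := by positivity
    have ht1 : t ≤ 1 := by
      rw [htdef, div_le_one hrpos]; exact hcase.le
    -- the convex combination point
    set w : E := (1 - t) • ybar + t • y with hwdef
    have hwQ : w ∈ Q := hQconv hybar hy (by linarith) ht0.le (by ring)
    have hwb : ‖w - ybar‖ ≤ rbar := by
      have : w - ybar = t • (y - ybar) := by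
        rw [hwdef]; module
      rw [this, norm_smul, Real.norm_of_nonneg ht0.le, ← hrdef, htdef]
      rw [div_mul_cancel₀ _ hrpos.ne']
    have hlw : l w ≤ ψ rbar := by
      refine (hψ rbar hrbar.le).2 ⟨w, ⟨hwQ, ?_⟩, rfl⟩
      simpa [Metric.mem_closedBall, dist_eq_norm] using hwb
    have hlweq : l w = (1 - t) * l ybar + t * l y := by
      have : w = AffineMap.lineMap ybar y t := by
        rw [hwdef, AffineMap.lineMap_apply_module]
      rw [this, AffineMap.apply_lineMap, AffineMap.lineMap_apply_module]
      simp [smul_eq_mul]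
    -- concavity bound: l y ≤ ψ rbar + Δ * (r - rbar)
    have hconc : l y ≤ ψ rbar + Δ * (r - rbar) := by
      have h1 : t * l y ≤ ψ rbar - (1 - t) * ψ 0 := by
        rw [hψ0]; linarith [hlw, hlweq.le]
      have h2 : l y ≤ (ψ rbar - (1 - t) * ψ 0) / t :=
        (le_div_iff₀ ht0).2 (by linarith [h1])
      refine h2.trans (le_of_eq ?_)
      rw [hΔdef, htdef]
      field_simp
      ring
    have hyoung := young_aux (μ' := μ') hρ hμ' hΔ hr
    have hΔrbar : 0 ≤ Δ * rbar := mul_nonneg hΔ hrbar.le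
    linarith

/-- Corollary B.1. Combining Lemmas B.2 and B.3: for
`x̄ ∈ Q` with `‖x̄ − ȳ‖ ≤ r̄` and every `b > 0`,
`λ*_μ(x̄) ≤ ψ(r̄) + (1+b)((ρ−1)/ρ)(2/(μρ))^{1/(ρ−1)}((ψ(r̄)−ψ(0))/r̄)^{ρ/(ρ−1)} + (μ/(2b^{ρ−1}))r̄^ρ`. -/
theorem lambda_star_combined_bound
    {E : Type*} [NormedAddCommGroup E] [NormedSpace ℝ E] [FiniteDimensional ℝ E]
    (Q : Set E) (hQc : IsClosed Q) (hQconv : Convex ℝ Q)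
    (ybar : E) (hybar : ybar ∈ Q)
    (l : E →ᵃ[ℝ] ℝ) (ρ μ : ℝ) (hρ : 2 ≤ ρ) (hμ : 0 < μ)
    (rbar : ℝ) (hrbar : 0 < rbar)
    (xbar : E) (hxbarQ : xbar ∈ Q) (hxbar : ‖xbar - ybar‖ ≤ rbar)
    (ψ : ℝ → ℝ)
    (hψ : ∀ r : ℝ, 0 ≤ r →
      IsGreatest ((fun x => l x) '' (Q ∩ Metric.closedBall ybar r)) (ψ r)) :
    ∀ b : ℝ, 0 < b →
      sSup ((fun y => l y - (μ / 2) * ‖y - xbar‖ ^ ρ) '' Q) ≤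
        ψ rbar + (1 + b) * ((ρ - 1) / ρ) * (2 / (μ * ρ)) ^ (1 / (ρ - 1)) *
            ((ψ rbar - ψ 0) / rbar) ^ (ρ / (ρ - 1)) +
          μ / (2 * b ^ (ρ - 1)) * rbar ^ ρ := by
  intro b hb
  have hρ0 : (0:ℝ) < ρ := by linarith
  have hρm1 : (0:ℝ) < ρ - 1 := by linarith
  have h1b : (0:ℝ) < 1 + b := by linarith
  have hpow : (0:ℝ) < (1+b)^(ρ-1) := Real.rpow_pos_of_pos h1b _
  have hbpow : (0:ℝ) < b^(ρ-1) := Real.rpow_pos_of_pos hb _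
  set μ' : ℝ := μ * ((1+b)^(ρ-1))⁻¹ with hμ'def
  have hμ'0 : 0 < μ' := by positivity
  apply csSup_le ⟨_, Set.mem_image_of_mem _ hybar⟩
  rintro z ⟨y, hy, rfl⟩
  simp only []
  -- Step A
  have hnorm : ‖y - ybar‖ ^ ρ ≤ (‖y - xbar‖ + ‖xbar - ybar‖) ^ ρ := by
    apply Real.rpow_le_rpow (norm_nonneg _) _ hρ0.le
    calc ‖y - ybar‖ = ‖(y - xbar) + (xbar - ybar)‖ := by congr 1; abel
      _ ≤ ‖y - xbar‖ + ‖xbar - ybar‖ := norm_add_le _ _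
  have hsum := add_rpow_le_aux (ρ := ρ) hρ hb (norm_nonneg (y - xbar)) (norm_nonneg (xbar - ybar))
  have h1 : ‖y - ybar‖ ^ ρ ≤ (1+b)^(ρ-1) * ‖y - xbar‖^ρ + (1+1/b)^(ρ-1) * ‖xbar - ybar‖^ρ :=
    hnorm.trans hsum
  -- multiply by μ'/2
  have hcoef1 : μ'/2 * (1+b)^(ρ-1) = μ/2 := by
    rw [hμ'def]; field_simp
  have hcoef2 : μ'/2 * (1+1/b)^(ρ-1) = μ/(2 * b^(ρ-1)) := by
    rw [hμ'def]
    have e : (1+1/b) = (1+b) * b⁻¹ := by field_simp; ring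
    rw [e, Real.mul_rpow h1b.le (by positivity), Real.inv_rpow hb.le]
    field_simp
  have hA : μ'/2 * ‖y - ybar‖ ^ ρ ≤
      μ/2 * ‖y - xbar‖^ρ + μ/(2 * b^(ρ-1)) * ‖xbar - ybar‖^ρ := by
    calc μ'/2 * ‖y - ybar‖ ^ ρ
        ≤ μ'/2 * ((1+b)^(ρ-1) * ‖y - xbar‖^ρ + (1+1/b)^(ρ-1) * ‖xbar - ybar‖^ρ) :=
          mul_le_mul_of_nonneg_left h1 (by positivity)
      _ = μ'/2 * (1+b)^(ρ-1) * ‖y - xbar‖^ρ + μ'/2 * (1+1/b)^(ρ-1) * ‖xbar - ybar‖^ρ := by ring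
      _ = μ/2 * ‖y - xbar‖^ρ + μ/(2 * b^(ρ-1)) * ‖xbar - ybar‖^ρ := by rw [hcoef1, hcoef2]
  -- Step B
  have hB := lemmaB2 Q hQconv ybar hybar l ρ μ' hρ hμ'0 rbar hrbar ψ hψ y hy
  -- coefficient identity
  have hcoef3 : (2/(μ'*ρ))^(1/(ρ-1)) = (1+b) * (2/(μ*ρ))^(1/(ρ-1)) := by
    have e : 2/(μ'*ρ) = (1+b)^(ρ-1) * (2/(μ*ρ)) := by
      rw [hμ'def]; field_simp
    rw [e, Real.mul_rpow hpow.le (by positivity), ← Real.rpow_mul h1b.le,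
      mul_one_div_cancel hρm1.ne', Real.rpow_one]
  rw [hcoef3] at hB
  -- bound the tail term
  have htail : μ/(2 * b^(ρ-1)) * ‖xbar - ybar‖^ρ ≤ μ/(2 * b^(ρ-1)) * rbar^ρ := by
    apply mul_le_mul_of_nonneg_left _ (by positivity)
    exact Real.rpow_le_rpow (norm_nonneg _) hxbar hρ0.le
  have hψ0 : ψ 0 = l ybar := by
    obtain ⟨x, ⟨hxQ, hxb⟩, hlx⟩ := (hψ 0 le_rfl).1
    have hx : x = ybar := by
      simpa [dist_le_zero] using Metric.mem_closedBall.1 hxb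
    rw [← hlx, hx]
  have hmono : ψ 0 ≤ ψ rbar := by
    refine (hψ rbar hrbar.le).2 ⟨ybar, ⟨hybar, ?_⟩, hψ0.symm⟩
    simp [Metric.mem_closedBall, hrbar.le]
  have hΔq : 0 ≤ ((ψ rbar - ψ 0) / rbar) ^ (ρ/(ρ-1)) :=
    Real.rpow_nonneg (div_nonneg (by linarith) hrbar.le) _
  linarith [hB, hA, htail]
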